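/- Let $a_M \ge 2$, $T > 0$, $C > 0$. Let $(p_n)_{n\ge 2}$ be a sequence with $|p_n| \le C$ for all $n \ge 2$, and $(q_n)_{n \ge 0}$ with $|q_n| \le T^n$. Then $\sum_{k=2}^{n-1} \frac{\Gamma(k+a_M)\, p_k}{\Gamma(n+a_M)}\, q_{n-k} \to 0$ as $n \to \infty$. -/

import Mathlib

theorem stmt_3 (aM T C : ℝ) (haM : aM ≥ 2) (hT : T > 0) (hC : C > 0)
    (p q : ℕ → ℂ)
    (hp : ∀ n : ℕ, 2 ≤ n → ‖p n‖ ≤ C)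
    (hq : ∀ n : ℕ, ‖q n‖ ≤ T ^ n) :
    Filter.Tendsto
      (fun n : ℕ => ∑ k ∈ Finset.Icc 2 (n - 1),
        (Real.Gamma (k + aM) : ℂ) * p k / (Real.Gamma (n + aM) : ℂ) * q (n - k))
      Filter.atTop (nhds 0) := by
  have hGpos : ∀ k : ℕ, 0 < Real.Gamma (k + aM) := fun k =>
    Real.Gamma_pos_of_pos (by have := (Nat.cast_nonneg k : (0:ℝ) ≤ k); linarith)
  -- Gamma as product
  have prodGamma : ∀ k n : ℕ, k ≤ n →
      Real.Gamma (n + aM) = Real.Gamma (k + aM) * ∏ j ∈ Finset.Ico k n, ((j:ℝ) + aM) := by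
    intro k n hkn
    induction n, hkn using Nat.le_induction with
    | base => simp
    | succ n hkn ih =>
      rw [Finset.prod_Ico_succ_top hkn,
        show ((n+1:ℕ):ℝ) + aM = (↑n + aM) + 1 by push_cast; ring,
        Real.Gamma_add_one (by have := (Nat.cast_nonneg n : (0:ℝ) ≤ n); linarith), ih]
      ring
  have prodNonneg : ∀ k n : ℕ, (0:ℝ) ≤ ∏ j ∈ Finset.Ico k n, ((j:ℝ) + aM) := by
    intro k n
    apply Finset.prod_nonneg
    intro j _
    have := (Nat.cast_nonneg j : (0:ℝ) ≤ j); linarith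
  have factLB : ∀ k n : ℕ, k ≤ n →
      ((Nat.factorial (n - k) : ℕ) : ℝ) ≤ ∏ j ∈ Finset.Ico k n, ((j:ℝ) + aM) := by
    intro k n hkn
    induction n, hkn using Nat.le_induction with
    | base => simp
    | succ n hkn ih =>
      rw [Finset.prod_Ico_succ_top hkn,
        show n + 1 - k = n - k + 1 by omega, Nat.factorial_succ]
      push_cast
      have h2 : ((n - k : ℕ) : ℝ) + 1 ≤ (n:ℝ) + aM := by
        have : ((n - k : ℕ) : ℝ) ≤ (n : ℝ) := Nat.cast_le.2 (Nat.sub_le n k)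
        linarith
      calc (((n-k:ℕ):ℝ) + 1) * (Nat.factorial (n-k) : ℝ)
          = (Nat.factorial (n-k) : ℝ) * (((n-k:ℕ):ℝ) + 1) := by ring
        _ ≤ (∏ j ∈ Finset.Ico k n, ((j:ℝ) + aM)) * ((n:ℝ) + aM) := by
            apply mul_le_mul ih h2 (by positivity) (prodNonneg k n)
  have splitLB : ∀ k m : ℕ, k ≤ m →
      ((Nat.factorial (m - k) : ℕ) : ℝ) * ((m:ℝ) + aM) ≤ ∏ j ∈ Finset.Ico k (m+1), ((j:ℝ) + aM) := by
    intro k m hkm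
    rw [Finset.prod_Ico_succ_top hkm]
    apply mul_le_mul (factLB k m hkm) le_rfl
      (by have := (Nat.cast_nonneg m : (0:ℝ) ≤ m); linarith) (prodNonneg k m)

  -- per-(m) bound
  have key : ∀ m : ℕ, ‖∑ k ∈ Finset.Icc 2 m,
      (Real.Gamma (k + aM) : ℂ) * p k / (Real.Gamma ((m+1:ℕ) + aM) : ℂ) * q (m+1-k)‖
      ≤ C * T * Real.exp T / ((m:ℝ) + aM) := by
    intro m
    have hmaM : (0:ℝ) < (m:ℝ) + aM := by
      have := (Nat.cast_nonneg m : (0:ℝ) ≤ m); linarith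
    have term_bd : ∀ k ∈ Finset.Icc 2 m,
        ‖(Real.Gamma (k + aM) : ℂ) * p k / (Real.Gamma ((m+1:ℕ) + aM) : ℂ)
            * q (m+1-k)‖
          ≤ C * T / ((m:ℝ) + aM) * (T ^ (m-k) / (Nat.factorial (m-k) : ℝ)) := by
      intro k hk
      rw [Finset.mem_Icc] at hk
      obtain ⟨hk2, hkm⟩ := hk
      have hfactpos : (0:ℝ) < (Nat.factorial (m-k) : ℝ) := by
        exact_mod_cast Nat.factorial_pos (m-k)
      have hfrac : Real.Gamma (k + aM) / Real.Gamma ((m+1:ℕ) + aM)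
          ≤ 1 / ((Nat.factorial (m-k) : ℝ) * ((m:ℝ) + aM)) := by
        rw [prodGamma k (m+1) (by omega), div_mul_eq_div_div,
          div_self (ne_of_gt (hGpos k))]
        apply one_div_le_one_div_of_le (by positivity) (splitLB k m hkm)
      have e1 : ‖(Real.Gamma (k + aM) : ℂ) * p k
            / (Real.Gamma ((m+1:ℕ) + aM) : ℂ) * q (m+1-k)‖
          = Real.Gamma (k + aM) * ‖p k‖ / Real.Gamma ((m+1:ℕ) + aM)
            * ‖q (m+1-k)‖ := by
        rw [norm_mul, norm_div, norm_mul, Complex.norm_real, Complex.norm_real,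
          Real.norm_eq_abs, Real.norm_eq_abs,
          abs_of_pos (hGpos k), abs_of_pos (hGpos (m+1))]
      rw [e1]
      calc Real.Gamma (k + aM) * ‖p k‖ / Real.Gamma ((m+1:ℕ) + aM)
            * ‖q (m+1-k)‖
          ≤ Real.Gamma (k + aM) * C / Real.Gamma ((m+1:ℕ) + aM) * T ^ (m+1-k) := by
            gcongr
            · exact hp k hk2
            · exact hq (m+1-k)
        _ = Real.Gamma (k + aM) / Real.Gamma ((m+1:ℕ) + aM) * (C * T ^ (m+1-k)) := by
            ring
        _ ≤ 1 / ((Nat.factorial (m-k) : ℝ) * ((m:ℝ) + aM)) * (C * T ^ (m+1-k)) := by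
            apply mul_le_mul_of_nonneg_right hfrac (by positivity)
        _ = C * T / ((m:ℝ) + aM) * (T ^ (m-k) / (Nat.factorial (m-k) : ℝ)) := by
            rw [show m+1-k = (m-k)+1 from by omega, pow_succ]
            field_simp
    have sum_exp : ∑ k ∈ Finset.Icc 2 m, T ^ (m-k) / (Nat.factorial (m-k) : ℝ)
        ≤ Real.exp T := by
      have himg : ∑ k ∈ Finset.Icc 2 m, T ^ (m-k) / (Nat.factorial (m-k) : ℝ)
          = ∑ j ∈ (Finset.Icc 2 m).image (fun k => m - k),
              T ^ j / (Nat.factorial j : ℝ) := by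
        rw [Finset.sum_image]
        intro a ha b hb h
        rw [Finset.coe_Icc, Set.mem_Icc] at ha hb
        simp only at h
        omega
      rw [himg]
      calc ∑ j ∈ (Finset.Icc 2 m).image (fun k => m - k), T ^ j / (Nat.factorial j : ℝ)
          ≤ ∑ j ∈ Finset.range (m+1), T ^ j / (Nat.factorial j : ℝ) := by
            apply Finset.sum_le_sum_of_subset_of_nonneg
            · intro j hj
              simp only [Finset.mem_image, Finset.mem_Icc] at hj
              rw [Finset.mem_range]
              omega
            · intro j _ _
              positivity
        _ ≤ Real.exp T := Real.sum_le_exp_of_nonneg hT.le (m+1)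
    calc ‖∑ k ∈ Finset.Icc 2 m,
          (Real.Gamma (k + aM) : ℂ) * p k / (Real.Gamma ((m+1:ℕ) + aM) : ℂ) * q (m+1-k)‖
        ≤ ∑ k ∈ Finset.Icc 2 m, ‖(Real.Gamma (k + aM) : ℂ) * p k
            / (Real.Gamma ((m+1:ℕ) + aM) : ℂ) * q (m+1-k)‖ := norm_sum_le _ _
      _ ≤ ∑ k ∈ Finset.Icc 2 m,
            C * T / ((m:ℝ) + aM) * (T ^ (m-k) / (Nat.factorial (m-k) : ℝ)) :=
          Finset.sum_le_sum term_bd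
      _ = C * T / ((m:ℝ) + aM) * ∑ k ∈ Finset.Icc 2 m,
            T ^ (m-k) / (Nat.factorial (m-k) : ℝ) := by
          rw [Finset.mul_sum]
      _ ≤ C * T / ((m:ℝ) + aM) * Real.exp T := by
          apply mul_le_mul_of_nonneg_left sum_exp (by positivity)
      _ = C * T * Real.exp T / ((m:ℝ) + aM) := by ring
  rw [tendsto_zero_iff_norm_tendsto_zero]
  apply squeeze_zero' (Filter.Eventually.of_forall fun n => norm_nonneg _)
    ?_ (tendsto_const_div_atTop_nhds_zero_nat (C * T * Real.exp T))
  filter_upwards [Filter.eventually_ge_atTop 1] with n hn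
  obtain ⟨m, rfl⟩ : ∃ m, n = m + 1 := ⟨n-1, by omega⟩
  have h1 : m + 1 - 1 = m := rfl
  simp only [h1]
  refine (key m).trans ?_
  have hm1 : (0:ℝ) < ((m+1:ℕ):ℝ) := by positivity
  apply div_le_div_of_nonneg_left (by positivity) hm1
  push_cast
  linarith
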